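/- Let (X_k)_{k≥1} be independent standard Gaussian random variables and t > 0. If t > 1/2, then almost surely the series Σ_{k=1}^∞ k^{−2t} X_k² converges (is finite). If 0 < t ≤ 1/2, then almost surely the series Σ_{k=1}^∞ k^{−2t} X_k² diverges to infinity. (Consequently, the Gaussian field associated with the Korobov space of smoothness r lies almost surely in the Korobov space of smoothness s if r − s > 1/2, and almost surely not if r − s ≤ 1/2: а loss of smoothness of exactly 1/2.) -/

import Mathlib

open MeasureTheory ProbabilityTheory Filter Finset Real
open scoped ENNReal NNReal Topology

lemma aux_integrable_sq_gaussian : Integrable (fun x : ℝ => x ^ 2) (gaussianReal 0 1) := by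
  rw [gaussianReal_of_var_ne_zero 0 one_ne_zero,
    integrable_withDensity_iff (measurable_gaussianPDF 0 1)
      (ae_of_all _ fun x => ENNReal.ofReal_lt_top)]
  have h : ∀ x : ℝ, x ^ 2 * (gaussianPDF 0 1 x).toReal
      = (Real.sqrt (2 * π))⁻¹ * (x ^ 2 * Real.exp (-(1/2) * x ^ 2)) := by
    intro x
    rw [gaussianPDF, ENNReal.toReal_ofReal (gaussianPDFReal_nonneg _ _ _), gaussianPDFReal]
    push_cast
    ring_nf
  simp_rw [h]
  refine Integrable.const_mul ?_ _
  have := integrable_rpow_mul_exp_neg_mul_sq (b := 1/2) (by norm_num) (s := 2) (by norm_num)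
  simpa [Real.rpow_two] using this

lemma aux_integral_sq_gaussian_pos : 0 < ∫ x, x ^ 2 ∂(gaussianReal 0 1) := by
  rw [integral_pos_iff_support_of_nonneg (fun x => sq_nonneg x) aux_integrable_sq_gaussian]
  have hsupp : (Function.support fun x : ℝ => x ^ 2) = {(0 : ℝ)}ᶜ := by
    ext x; simp [Function.support, pow_eq_zero_iff]
  rw [hsupp]
  have h0 : gaussianReal 0 1 {(0 : ℝ)} = 0 :=
    gaussianReal_absolutelyContinuous 0 one_ne_zero (measure_singleton 0)
  have : gaussianReal 0 1 {(0 : ℝ)}ᶜ = 1 := by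
    rw [measure_compl (measurableSet_singleton 0) (measure_ne_top _ _), h0, measure_univ]
    simp
  rw [this]
  exact one_pos

lemma aux_not_summable {Y : ℕ → ℝ} (hY : ∀ k, 0 ≤ Y k) {E : ℝ} (hE : 0 < E)
    (hT : Tendsto (fun n : ℕ => (∑ i ∈ range n, Y i) / n) atTop (𝓝 E)) :
    ¬ Summable (fun k : ℕ => ((k : ℝ) + 1)⁻¹ * Y k) := by
  intro hs
  set f : ℕ → ℝ := fun k => ((k : ℝ) + 1)⁻¹ * Y k with hf
  have h2 : Tendsto (fun n : ℕ => 2 * n) atTop atTop :=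
    tendsto_atTop_mono (fun n => by simp; omega) tendsto_id
  have hzero : Tendsto (fun n : ℕ => ∑ i ∈ Ico n (2 * n), f i) atTop (𝓝 0) := by
    have hp : Tendsto (fun n : ℕ => ∑ i ∈ range n, f i) atTop (𝓝 (∑' i, f i)) :=
      hs.hasSum.tendsto_sum_nat
    have := (hp.comp h2).sub hp
    simp only [sub_self] at this
    refine this.congr fun n => ?_
    rw [Finset.sum_Ico_eq_sub _ (by omega)]
    rfl
  have hS2 : Tendsto (fun n : ℕ => (∑ i ∈ range (2 * n), Y i) / ((2 * n : ℕ) : ℝ))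
      atTop (𝓝 E) := hT.comp h2
  have hdiff : Tendsto
      (fun n : ℕ => (∑ i ∈ range (2 * n), Y i) / ((2 * n : ℕ) : ℝ)
        - (∑ i ∈ range n, Y i) / n / 2) atTop (𝓝 (E - E / 2)) :=
    hS2.sub (hT.div_const 2)
  have key : ∀ n : ℕ, (∑ i ∈ range (2 * n), Y i) / ((2 * n : ℕ) : ℝ)
      - (∑ i ∈ range n, Y i) / n / 2 ≤ ∑ i ∈ Ico n (2 * n), f i := by
    intro n
    rcases Nat.eq_zero_or_pos n with hn | hn
    · simp [hn]
    have hlhs : (∑ i ∈ range (2 * n), Y i) / ((2 * n : ℕ) : ℝ)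
        - (∑ i ∈ range n, Y i) / n / 2 = (∑ i ∈ Ico n (2 * n), Y i) / ((2 * n : ℕ) : ℝ) := by
      rw [Finset.sum_Ico_eq_sub _ (by omega), div_div, sub_div]
      push_cast
      ring_nf
    rw [hlhs, Finset.sum_div]
    refine Finset.sum_le_sum fun i hi => ?_
    have hi' := Finset.mem_Ico.1 hi
    have hcast : ((i : ℝ) + 1) ≤ ((2 * n : ℕ) : ℝ) := by
      have : (i + 1 : ℕ) ≤ 2 * n := by omega
      exact_mod_cast this
    rw [div_eq_inv_mul]
    exact mul_le_mul_of_nonneg_right (inv_anti₀ (by positivity) hcast) (hY i)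
  have hle : E - E / 2 ≤ 0 := le_of_tendsto_of_tendsto' hdiff hzero key
  linarith

/-- Loss of smoothness `1/2` for the Gaussian field: for
independent standard Gaussians `(X_k)_{k≥1}`, the series `Σ_{k≥1} k^{−2t} X_k²`
converges almost surely when `t > 1/2` and diverges almost surely when
`0 < t ≤ 1/2`. -/
theorem stmt19
    {Ω : Type*} [MeasurableSpace Ω] (P : Measure Ω) [IsProbabilityMeasure P]
    (X : ℕ → Ω → ℝ)
    (hindep : iIndepFun X P)
    (hgauss : ∀ k, Measure.map (X k) P = gaussianReal 0 1)
    (t : ℝ) (ht : 0 < t) :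
    (1/2 < t →
      ∀ᵐ ω ∂P, Summable fun k : ℕ => ((k : ℝ) + 1) ^ (-(2 * t)) * X k ω ^ 2) ∧
    (t ≤ 1/2 →
      ∀ᵐ ω ∂P, ¬ Summable fun k : ℕ => ((k : ℝ) + 1) ^ (-(2 * t)) * X k ω ^ 2) := by
  have hae : ∀ k, AEMeasurable (X k) P := by
    intro k
    by_contra h
    have h0 : Measure.map (X k) P = 0 := Measure.map_of_not_aemeasurable h
    rw [hgauss k] at h0
    have := congrArg (fun μ : Measure ℝ => μ Set.univ) h0
    simp at this
  set a : ℕ → ℝ := fun k => ((k : ℝ) + 1) ^ (-(2 * t)) with ha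
  have ha_nonneg : ∀ k, 0 ≤ a k := fun k => Real.rpow_nonneg (by positivity) _
  have hsq_ae : ∀ k, AEMeasurable (fun ω => X k ω ^ 2) P := fun k => (hae k).pow_const 2
  constructor
  · -- convergent part, t > 1/2
    intro ht'
    have hsummable_a : Summable a := by
      have h1 : Summable (fun n : ℕ => (n : ℝ) ^ (-(2 * t))) :=
        Real.summable_nat_rpow.mpr (by linarith)
      have h2 := (summable_nat_add_iff 1).mpr h1
      refine h2.congr fun n => ?_
      push_cast
      ring_nf
      simp only [ha]
      ring_nf
    set C : ℝ≥0∞ := ∫⁻ x, ENNReal.ofReal (x ^ 2) ∂(gaussianReal 0 1) with hC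
    have hC_lt : C < ∞ := aux_integrable_sq_gaussian.lintegral_lt_top
    have haM : ∀ k, AEMeasurable (fun ω => ENNReal.ofReal (a k * X k ω ^ 2)) P :=
      fun k => (((hsq_ae k).const_mul (a k)).ennreal_ofReal)
    have hterm : ∀ k, ∫⁻ ω, ENNReal.ofReal (a k * X k ω ^ 2) ∂P = ENNReal.ofReal (a k) * C := by
      intro k
      have h1 : ∀ ω, ENNReal.ofReal (a k * X k ω ^ 2)
          = ENNReal.ofReal (a k) * ENNReal.ofReal (X k ω ^ 2) :=
        fun ω => ENNReal.ofReal_mul (ha_nonneg k)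
      simp_rw [h1]
      rw [lintegral_const_mul'' _ ((hsq_ae k).ennreal_ofReal)]
      congr 1
      have := lintegral_map' (f := fun x : ℝ => ENNReal.ofReal (x ^ 2)) (g := X k)
        (by rw [hgauss k]; exact (measurable_id.pow_const 2).ennreal_ofReal.aemeasurable)
        (hae k)
      rw [hgauss k] at this
      rw [← this]
     
    have hkey : ∫⁻ ω, ∑' k, ENNReal.ofReal (a k * X k ω ^ 2) ∂P < ∞ := by
      rw [lintegral_tsum haM]
      simp_rw [hterm]
      rw [ENNReal.tsum_mul_right]
      refine ENNReal.mul_lt_top ?_ hC_lt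
      rw [← ENNReal.ofReal_tsum_of_nonneg ha_nonneg hsummable_a]
      exact ENNReal.ofReal_lt_top
    have hfin : ∀ᵐ ω ∂P, ∑' k, ENNReal.ofReal (a k * X k ω ^ 2) < ∞ :=
      ae_lt_top' (AEMeasurable.ennreal_tsum haM) hkey.ne
    filter_upwards [hfin] with ω hω
    have hsum := ENNReal.summable_toReal hω.ne
    refine hsum.congr fun k => ?_
    rw [ENNReal.toReal_ofReal (mul_nonneg (ha_nonneg k) (sq_nonneg _))]
  · -- divergent part, t ≤ 1/2
    intro ht'
    set Y : ℕ → Ω → ℝ := fun k ω => X k ω ^ 2 with hY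
    have hYint : Integrable (Y 0) P := by
      have := (integrable_map_measure
        (f := X 0) (g := fun x : ℝ => x ^ 2)
        (by rw [hgauss 0]; exact (measurable_id.pow_const 2).aestronglyMeasurable)
        (hae 0)).mp (by rw [hgauss 0]; exact aux_integrable_sq_gaussian)
      exact this
    have hident : ∀ i, IdentDistrib (Y i) (Y 0) P P := by
      intro i
      refine ⟨hsq_ae i, hsq_ae 0, ?_⟩
      have hm : ∀ j, Measure.map (Y j) P
          = Measure.map (fun x : ℝ => x ^ 2) (gaussianReal 0 1) := by
        intro j
        rw [← hgauss j, AEMeasurable.map_map_of_aemeasurable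
          (by rw [hgauss j]; exact (measurable_id.pow_const 2).aemeasurable) (hae j)]
        rfl
      rw [hm i, hm 0]
    have hpind : Pairwise (Function.onFun (IndepFun · · P) Y) := by
      intro i j hij
      exact (hindep.indepFun hij).comp (measurable_id.pow_const 2) (measurable_id.pow_const 2)
    have hE : P[Y 0] = ∫ x, x ^ 2 ∂(gaussianReal 0 1) := by
      rw [← hgauss 0, integral_map (hae 0)
        (by rw [hgauss 0]; exact (measurable_id.pow_const 2).aestronglyMeasurable)]
    have hSLLN := strong_law_ae_real Y hYint hpind hident
    filter_upwards [hSLLN] with ω hω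
    intro hsumm
    have hEpos : 0 < P[Y 0] := hE ▸ aux_integral_sq_gaussian_pos
    refine aux_not_summable (fun k => sq_nonneg (X k ω)) hEpos hω ?_
    refine Summable.of_nonneg_of_le (fun k => by positivity) (fun k => ?_) hsumm
    have h1 : ((k : ℝ) + 1)⁻¹ = ((k : ℝ) + 1) ^ (-1 : ℝ) := (Real.rpow_neg_one _).symm
    rw [h1]
    refine mul_le_mul_of_nonneg_right ?_ (sq_nonneg _)
    exact Real.rpow_le_rpow_of_exponent_le (by push_cast; linarith [Nat.cast_nonneg (α := ℝ) k])
      (by linarith)
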